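/- Let B : X → X be a bounded linear operator, extended to ℓ^∞(X) by (Bx)_n = B x_n and hence to a bounded operator B̄ on Y = ℓ^∞(X)/c₀(X). Then the spectrum of B̄ on Y equals the spectrum of B on X. -/

import Mathlib

set_option linter.unusedSectionVars false

open Filter Topology
open scoped ENNReal

noncomputable section

variable (X : Type*) [NormedAddCommGroup X] [NormedSpace ℂ X] [CompleteSpace X]

/-- `ℓ^∞(X)`: the Banach space of bounded sequences in `X` with the sup norm. -/
abbrev Linf : Type _ := ↥(lp (fun _ : ℕ => X) ∞)

/-- `c₀(X)`: the subspace of `ℓ^∞(X)` of sequences converging to `0`. -/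
def czero : Submodule ℂ (Linf X) where
  carrier := {f | Tendsto (fun n => f n) atTop (𝓝 (0 : X))}
  add_mem' := by
    intro f g hf hg
    simpa [lp.coeFn_add] using hf.add hg
  zero_mem' := by
    simp [lp.coeFn_zero]
  smul_mem' := by
    intro c f hf
    simpa [lp.coeFn_smul] using hf.const_smul c

instance : IsClosed ((czero X : Set (Linf X))) := by
  rw [← isSeqClosed_iff_isClosed]
  intro F f hF hFf
  show Tendsto (fun n => f n) atTop (𝓝 (0 : X))
  rw [Metric.tendsto_atTop]
  intro ε hε
  obtain ⟨k, hk⟩ := (Metric.tendsto_atTop.mp hFf (ε / 2) (by linarith)).imp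
    (fun k h => h k le_rfl)
  have hFk : Tendsto (fun n => (F k) n) atTop (𝓝 (0 : X)) := hF k
  obtain ⟨N, hN⟩ := Metric.tendsto_atTop.mp hFk (ε / 2) (by linarith)
  refine ⟨N, fun n hn => ?_⟩
  have h1 : ‖f n - (F k) n‖ ≤ ‖f - F k‖ := by
    have := lp.norm_apply_le_norm (ENNReal.top_ne_zero) (f - F k) n
    simpa [lp.coeFn_sub] using this
  have h2 : ‖f - F k‖ < ε / 2 := by
    rw [← dist_eq_norm] at *
    rw [dist_comm]
    exact hk
  have h3 : ‖(F k) n‖ < ε / 2 := by simpa [dist_eq_norm] using hN n hn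
  have : ‖f n‖ ≤ ‖f n - (F k) n‖ + ‖(F k) n‖ := by
    calc ‖f n‖ = ‖(f n - (F k) n) + (F k) n‖ := by rw [sub_add_cancel]
      _ ≤ ‖f n - (F k) n‖ + ‖(F k) n‖ := norm_add_le _ _
  · simp only [dist_eq_norm, sub_zero]
    calc ‖f n‖ ≤ ‖f n - (F k) n‖ + ‖(F k) n‖ := this
      _ < ε / 2 + ε / 2 := by exact add_lt_add (lt_of_le_of_lt h1 h2) h3
      _ = ε := by ring

/-- The quotient space `Y = ℓ^∞(X)/c₀(X)`. -/
abbrev YY := (Linf X) ⧸ (czero X)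

/-- The shift, as a map of bounded sequences. -/
def shiftFun (f : Linf X) : Linf X :=
  ⟨fun n => f (n + 1), memℓp_infty ⟨‖f‖, by
    rintro r ⟨n, rfl⟩
    exact lp.norm_apply_le_norm ENNReal.top_ne_zero f (n + 1)⟩⟩

@[simp] lemma shiftFun_apply (f : Linf X) (n : ℕ) : (shiftFun X f) n = f (n + 1) := rfl

/-- The shift operator `S` on `ℓ^∞(X)`, `(Sx)ₙ = x_{n+1}`. -/
def shiftL : Linf X →L[ℂ] Linf X :=
  LinearMap.mkContinuous
    { toFun := shiftFun X
      map_add' := fun _ _ => rfl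
      map_smul' := fun _ _ => rfl }
    1
    (fun f => by
      simp only [one_mul, LinearMap.coe_mk, AddHom.coe_mk]
      exact lp.norm_le_of_forall_le (norm_nonneg f)
        (fun n => lp.norm_apply_le_norm ENNReal.top_ne_zero f (n + 1)))

@[simp] lemma shiftL_apply (f : Linf X) (n : ℕ) : (shiftL X f) n = f (n + 1) := rfl

lemma shift_mem_czero {f : Linf X} (hf : f ∈ czero X) : shiftL X f ∈ czero X := by
  have : Tendsto (fun n => f (n + 1)) atTop (𝓝 (0 : X)) :=
    hf.comp (tendsto_add_atTop_nat 1)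
  exact this

/-- The reduced shift operator `S̄` on `Y = ℓ^∞(X)/c₀(X)`, as a linear map. -/
def SbarLin : YY X →ₗ[ℂ] YY X :=
  Submodule.liftQ (czero X) ((czero X).mkQ.comp (shiftL X).toLinearMap)
    (by
      intro f hf
      simp only [LinearMap.mem_ker, LinearMap.comp_apply, Submodule.mkQ_apply,
        ContinuousLinearMap.coe_coe, Submodule.Quotient.mk_eq_zero]
      exact shift_mem_czero X hf)

lemma SbarLin_mk (f : Linf X) :
    SbarLin X (Submodule.Quotient.mk f) = Submodule.Quotient.mk (shiftL X f) := rfl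

/-- The reduced shift operator `S̄` on `Y = ℓ^∞(X)/c₀(X)`. -/
def Sbar : YY X →L[ℂ] YY X :=
  (SbarLin X).mkContinuous 1 (by
    intro y
    rw [one_mul]
    refine le_of_forall_pos_le_add (fun ε hε => ?_)
    obtain ⟨m, rfl, hm⟩ := Submodule.Quotient.norm_mk_lt y hε
    rw [SbarLin_mk]
    calc ‖(Submodule.Quotient.mk (shiftL X m) : YY X)‖ ≤ ‖shiftL X m‖ :=
          Submodule.Quotient.norm_mk_le _ _
      _ ≤ ‖m‖ := lp.norm_le_of_forall_le (norm_nonneg m)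
            (fun n => lp.norm_apply_le_norm ENNReal.top_ne_zero m (n + 1))
      _ ≤ ‖(Submodule.Quotient.mk m : YY X)‖ + ε := hm.le)

lemma Sbar_mk (f : Linf X) :
    Sbar X (Submodule.Quotient.mk f) = Submodule.Quotient.mk (shiftL X f) := rfl

/-- The function `g(λ) = R(λ, S̄) x̄ = (λ - S̄)⁻¹ x̄`. -/
def gfun (x : Linf X) (z : ℂ) : YY X :=
  (resolvent (Sbar X) z) (Submodule.Quotient.mk x)

/-- The spectrum `σ(x)` of a bounded sequence `x`: the set of points `z₀ ∈ ℂ` such that the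
holomorphic function `g(λ) = R(λ, S̄) x̄` (defined for `|λ| ≠ 1`) admits no holomorphic extension
to a neighborhood of `z₀`. -/
def seqSpectrum (x : Linf X) : Set ℂ :=
  {z₀ : ℂ | ¬ ∃ (U : Set ℂ) (h : ℂ → YY X), IsOpen U ∧ z₀ ∈ U ∧ AnalyticOnNhd ℂ h U ∧
      ∀ z ∈ U, ‖z‖ ≠ 1 → h z = gfun X x z}

/-- The extension of an operator `B` on `X` to `ℓ^∞(X)`, acting coordinatewise. -/
def BextFun (B : X →L[ℂ] X) (f : Linf X) : Linf X :=
  ⟨fun n => B (f n), memℓp_infty ⟨‖B‖ * ‖f‖, by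
    rintro r ⟨n, rfl⟩
    exact (B.le_opNorm _).trans
      (mul_le_mul_of_nonneg_left (lp.norm_apply_le_norm ENNReal.top_ne_zero f n)
        (norm_nonneg B))⟩⟩

@[simp] lemma BextFun_apply (B : X →L[ℂ] X) (f : Linf X) (n : ℕ) :
    (BextFun X B f) n = B (f n) := rfl

/-- The extension of `B` to `ℓ^∞(X)` as a bounded operator, `(Bx)ₙ = B xₙ`. -/
def Bext (B : X →L[ℂ] X) : Linf X →L[ℂ] Linf X :=
  LinearMap.mkContinuous
    { toFun := BextFun X B
      map_add' := by
        intro f g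
        apply Subtype.ext
        funext n
        show B ((f + g) n) = B (f n) + B (g n)
        have : (f + g) n = f n + g n := by rw [lp.coeFn_add]; rfl
        rw [this, map_add]
      map_smul' := by
        intro c f
        apply Subtype.ext
        funext n
        show B ((c • f) n) = c • B (f n)
        have : (c • f) n = c • f n := by rw [lp.coeFn_smul]; rfl
        rw [this, map_smul] }
    ‖B‖
    (fun f => by
      simp only [LinearMap.coe_mk, AddHom.coe_mk]
      refine lp.norm_le_of_forall_le (mul_nonneg (norm_nonneg B) (norm_nonneg f)) fun n => ?_
      exact (B.le_opNorm _).trans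
        (mul_le_mul_of_nonneg_left (lp.norm_apply_le_norm ENNReal.top_ne_zero f n)
          (norm_nonneg B)))

@[simp] lemma Bext_apply (B : X →L[ℂ] X) (f : Linf X) (n : ℕ) :
    (Bext X B f) n = B (f n) := rfl

lemma Bext_mem_czero (B : X →L[ℂ] X) {f : Linf X} (hf : f ∈ czero X) :
    Bext X B f ∈ czero X := by
  have hf' : Tendsto (fun n => f n) atTop (𝓝 (0 : X)) := hf
  have : Tendsto (fun n => B (f n)) atTop (𝓝 (B (0 : X))) :=
    (B.continuous.tendsto 0).comp hf'
  rw [map_zero] at this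
  exact this

/-- The operator induced by `B` on the quotient `Y = ℓ^∞(X)/c₀(X)`, as a linear map. -/
def BbarLin (B : X →L[ℂ] X) : YY X →ₗ[ℂ] YY X :=
  Submodule.liftQ (czero X) ((czero X).mkQ.comp (Bext X B).toLinearMap)
    (by
      intro f hf
      simp only [LinearMap.mem_ker, LinearMap.comp_apply, Submodule.mkQ_apply,
        ContinuousLinearMap.coe_coe, Submodule.Quotient.mk_eq_zero]
      exact Bext_mem_czero X B hf)

lemma BbarLin_mk (B : X →L[ℂ] X) (f : Linf X) :
    BbarLin X B (Submodule.Quotient.mk f) = Submodule.Quotient.mk (Bext X B f) := rfl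

/-- The operator induced by `B` on the quotient `Y = ℓ^∞(X)/c₀(X)`. -/
def Bbar (B : X →L[ℂ] X) : YY X →L[ℂ] YY X :=
  (BbarLin X B).mkContinuous ‖B‖ (by
    intro y
    refine le_of_forall_pos_le_add (fun ε hε => ?_)
    have hδ : 0 < ε / (‖B‖ + 1) := by positivity
    obtain ⟨m, rfl, hm⟩ := Submodule.Quotient.norm_mk_lt y hδ
    rw [BbarLin_mk]
    have hB : (0:ℝ) ≤ ‖B‖ := norm_nonneg B
    have h0 : ‖Bext X B m‖ ≤ ‖B‖ * ‖m‖ :=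
      lp.norm_le_of_forall_le (mul_nonneg hB (norm_nonneg m)) fun n =>
        (B.le_opNorm _).trans
          (mul_le_mul_of_nonneg_left (lp.norm_apply_le_norm ENNReal.top_ne_zero m n) hB)
    have h1 : ‖(Submodule.Quotient.mk (Bext X B m) : YY X)‖ ≤ ‖B‖ * ‖m‖ :=
      (Submodule.Quotient.norm_mk_le _ _).trans h0
    have h2 : ‖B‖ * ‖m‖ ≤ ‖B‖ * (‖(Submodule.Quotient.mk m : YY X)‖ + ε / (‖B‖ + 1)) :=
      mul_le_mul_of_nonneg_left hm.le hB
    have hp : (0:ℝ) < ‖B‖ + 1 := by positivity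
    have h3 : ‖B‖ * (ε / (‖B‖ + 1)) ≤ ε := by
      rw [mul_div_assoc', div_le_iff₀ hp]
      nlinarith
    have h4 : ‖B‖ * (‖(Submodule.Quotient.mk m : YY X)‖ + ε / (‖B‖ + 1))
        = ‖B‖ * ‖(Submodule.Quotient.mk m : YY X)‖ + ‖B‖ * (ε / (‖B‖ + 1)) := mul_add _ _ _
    linarith)

lemma Bbar_mk (B : X →L[ℂ] X) (f : Linf X) :
    Bbar X B (Submodule.Quotient.mk f) = Submodule.Quotient.mk (Bext X B f) := rfl


lemma Bbar_one : Bbar X (1 : X →L[ℂ] X) = 1 := by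
  refine ContinuousLinearMap.ext fun y => ?_
  obtain ⟨f, rfl⟩ := Submodule.Quotient.mk_surjective (czero X) y
  rw [Bbar_mk, ContinuousLinearMap.one_apply]
  congr 1

lemma Bbar_mul (A B : X →L[ℂ] X) : Bbar X (A * B) = Bbar X A * Bbar X B := by
  refine ContinuousLinearMap.ext fun y => ?_
  obtain ⟨f, rfl⟩ := Submodule.Quotient.mk_surjective (czero X) y
  rw [ContinuousLinearMap.mul_apply, Bbar_mk, Bbar_mk, Bbar_mk]
  congr 1

lemma Bbar_sub (A B : X →L[ℂ] X) : Bbar X (A - B) = Bbar X A - Bbar X B := by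
  refine ContinuousLinearMap.ext fun y => ?_
  obtain ⟨f, rfl⟩ := Submodule.Quotient.mk_surjective (czero X) y
  rw [ContinuousLinearMap.sub_apply, Bbar_mk, Bbar_mk, Bbar_mk,
    ← Submodule.Quotient.mk_sub]
  congr 1

lemma Bbar_smul (c : ℂ) (A : X →L[ℂ] X) : Bbar X (c • A) = c • Bbar X A := by
  refine ContinuousLinearMap.ext fun y => ?_
  obtain ⟨f, rfl⟩ := Submodule.Quotient.mk_surjective (czero X) y
  rw [ContinuousLinearMap.smul_apply, Bbar_mk, Bbar_mk, ← Submodule.Quotient.mk_smul]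
  congr 1

lemma Bbar_algebraMapSub (lam : ℂ) (B : X →L[ℂ] X) :
    Bbar X (algebraMap ℂ (X →L[ℂ] X) lam - B)
      = algebraMap ℂ (YY X →L[ℂ] YY X) lam - Bbar X B := by
  rw [Bbar_sub, Algebra.algebraMap_eq_smul_one, Algebra.algebraMap_eq_smul_one,
    Bbar_smul, Bbar_one]

/-- Constant sequence in `ℓ^∞(X)`. -/
def constLinf (x : X) : Linf X :=
  ⟨fun _ => x, memℓp_infty ⟨‖x‖, by rintro r ⟨n, rfl⟩; exact le_rfl⟩⟩

@[simp] lemma constLinf_apply (x : X) (n : ℕ) : (constLinf X x) n = x := rfl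

lemma norm_le_norm_mk_const (x : X) :
    ‖x‖ ≤ ‖(Submodule.Quotient.mk (constLinf X x) : YY X)‖ := by
  by_contra h
  push_neg at h
  set y : YY X := Submodule.Quotient.mk (constLinf X x)
  have hε : (0:ℝ) < ‖x‖ - ‖y‖ := by linarith
  obtain ⟨m, hm, hmn⟩ := Submodule.Quotient.norm_mk_lt y (by linarith : (0:ℝ) < (‖x‖ - ‖y‖)/2)
  have hmem : constLinf X x - m ∈ czero X := by
    rw [← Submodule.Quotient.eq]
    exact hm.symm
  have htend : Tendsto (fun n => (constLinf X x - m) n) atTop (𝓝 (0 : X)) := hmem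
  have hmnorm : ‖m‖ < ‖x‖ := by linarith
  obtain ⟨n, hn⟩ := (Metric.tendsto_atTop.mp htend (‖x‖ - ‖m‖) (by linarith)).imp
    (fun n h => h n le_rfl)
  have hco : (constLinf X x - m) n = x - m n := by rw [lp.coeFn_sub]; rfl
  have h1 : ‖x - m n‖ < ‖x‖ - ‖m‖ := by
    have := hn
    rw [dist_eq_norm, sub_zero, hco] at this
    exact this
  have h2 : ‖m n‖ ≤ ‖m‖ := lp.norm_apply_le_norm ENNReal.top_ne_zero m n
  have h3 : ‖x‖ ≤ ‖x - m n‖ + ‖m n‖ := by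
    calc ‖x‖ = ‖(x - m n) + m n‖ := by rw [sub_add_cancel]
      _ ≤ ‖x - m n‖ + ‖m n‖ := norm_add_le _ _
  linarith

lemma Bext_const (A : X →L[ℂ] X) (x : X) :
    Bext X A (constLinf X x) = constLinf X (A x) :=
  Subtype.ext rfl

lemma isUnit_of_isUnit_Bbar (A : X →L[ℂ] X) (h : IsUnit (Bbar X A)) : IsUnit A := by
  obtain ⟨u, hu⟩ := h
  set C : YY X →L[ℂ] YY X := ↑u⁻¹ with hCdef
  have hCA : ∀ y : YY X, C (Bbar X A y) = y := by
    intro y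
    have h1 : ((↑u⁻¹ * ↑u : YY X →L[ℂ] YY X)) y = (1 : YY X →L[ℂ] YY X) y := by
      rw [u.inv_mul]
    simpa [hCdef, hu, ContinuousLinearMap.mul_apply] using h1
  have hAC : ∀ y : YY X, Bbar X A (C y) = y := by
    intro y
    have h1 : ((↑u * ↑u⁻¹ : YY X →L[ℂ] YY X)) y = (1 : YY X →L[ℂ] YY X) y := by
      rw [u.mul_inv]
    simpa [hCdef, hu, ContinuousLinearMap.mul_apply] using h1
  -- A is bounded below
  have hbound : ∀ x : X, ‖x‖ ≤ ‖C‖ * ‖A x‖ := by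
    intro x
    have h1 : ‖x‖ ≤ ‖(Submodule.Quotient.mk (constLinf X x) : YY X)‖ :=
      norm_le_norm_mk_const X x
    have h2 : (Submodule.Quotient.mk (constLinf X x) : YY X)
        = C (Bbar X A (Submodule.Quotient.mk (constLinf X x))) := (hCA _).symm
    have h3 : Bbar X A (Submodule.Quotient.mk (constLinf X x))
        = Submodule.Quotient.mk (constLinf X (A x)) := by
      rw [Bbar_mk, Bext_const]
    have h4 : ‖C (Bbar X A (Submodule.Quotient.mk (constLinf X x)))‖
        ≤ ‖C‖ * ‖A x‖ := by
      rw [h3]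
      refine (C.le_opNorm _).trans (mul_le_mul_of_nonneg_left ?_ (norm_nonneg C))
      refine (Submodule.Quotient.norm_mk_le _ _).trans ?_
      exact lp.norm_le_of_forall_le (norm_nonneg (A x)) fun n => le_rfl
    rw [h2] at h1
    exact h1.trans h4
  have hanti : AntilipschitzWith ‖C‖₊ A :=
    ContinuousLinearMap.antilipschitz_of_bound A (by simpa using hbound)
  have hinj : Function.Injective A := hanti.injective
  have hclosed : IsClosed (Set.range A) := hanti.isClosed_range A.uniformContinuous
  have hsurj : Function.Surjective A := by
    intro x
    have hy := hAC (Submodule.Quotient.mk (constLinf X x))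
    obtain ⟨g, hg⟩ := Submodule.Quotient.mk_surjective (czero X)
      (C (Submodule.Quotient.mk (constLinf X x)))
    rw [← hg, Bbar_mk] at hy
    have hmem : Bext X A g - constLinf X x ∈ czero X := by
      rw [← Submodule.Quotient.eq]
      exact hy
    have htend : Tendsto (fun n => (Bext X A g - constLinf X x) n) atTop (𝓝 (0 : X)) := hmem
    have hco : ∀ n, (Bext X A g - constLinf X x) n = A (g n) - x := by
      intro n; rw [lp.coeFn_sub]; rfl
    have htend2 : Tendsto (fun n => A (g n)) atTop (𝓝 x) := by
      have := htend.congr (fun n => hco n)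
      rwa [tendsto_sub_nhds_zero_iff] at this
    have hx : x ∈ closure (Set.range A) :=
      mem_closure_of_tendsto htend2 (Eventually.of_forall fun n => Set.mem_range_self _)
    rw [hclosed.closure_eq] at hx
    exact hx
  have hker : LinearMap.ker (A : X →ₗ[ℂ] X) = ⊥ := LinearMap.ker_eq_bot.mpr hinj
  have hrange : LinearMap.range (A : X →ₗ[ℂ] X) = ⊤ := LinearMap.range_eq_top.mpr hsurj
  set e : X ≃L[ℂ] X := ContinuousLinearEquiv.ofBijective A hker hrange with hedef
  have he : ∀ x, e x = A x := fun x => by rw [hedef]; rfl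
  refine ⟨⟨A, (e.symm : X →L[ℂ] X), ?_, ?_⟩, rfl⟩
  · refine ContinuousLinearMap.ext fun x => ?_
    show A (e.symm x) = x
    rw [← he]
    exact e.apply_symm_apply x
  · refine ContinuousLinearMap.ext fun x => ?_
    show e.symm (A x) = x
    rw [← he]
    exact e.symm_apply_apply x

lemma isUnit_Bbar_of_isUnit (A : X →L[ℂ] X) (h : IsUnit A) : IsUnit (Bbar X A) := by
  obtain ⟨u, rfl⟩ := h
  refine ⟨⟨Bbar X ↑u, Bbar X ↑u⁻¹, ?_, ?_⟩, rfl⟩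
  · rw [← Bbar_mul, u.mul_inv, Bbar_one]
  · rw [← Bbar_mul, u.inv_mul, Bbar_one]

/-- The spectrum of the operator `B̄` induced on `Y = ℓ^∞(X)/c₀(X)` by a
bounded operator `B` on `X` (acting coordinatewise) equals the spectrum of `B` on `X`. -/
theorem spectrum_Bbar_eq_spectrum (B : X →L[ℂ] X) :
    spectrum ℂ (Bbar X B) = spectrum ℂ B := by
  ext lam
  rw [spectrum.mem_iff, spectrum.mem_iff, ← Bbar_algebraMapSub]
  constructor
  · intro h hA
    exact h (isUnit_Bbar_of_isUnit X _ hA)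
  · intro h hA
    exact h (isUnit_of_isUnit_Bbar X _ hA)
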